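/- arXiv:1910.14147 — 2 statements merged into one kernel-verified Lean document; each statement's English description precedes it below -/
import Mathlib

section
/- Assume λ₁ < 0 and gᵀv₁ ≠ 0. Then every global minimizer z* of f over the closed unit ball satisfies ‖z*‖₂ = 1, any multiplier λ ≥ 0 satisfying (H + λI)z* + g = 0, λ·(1 − ‖z*‖₂) = 0 and H + λI positive semidefinite in fact satisfies λ > −λ₁ (so H + λI is positive definite), and z* = −(H + λI)⁻¹ g. -/
open Matrix

/-- The Euclidean (`ℓ₂`) norm of a vector in `ℝⁿ`. -/
noncomputable def euclNorm {n : ℕ} (x : Fin n → ℝ) : ℝ := Real.sqrt (∑ i, x i ^ 2)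

/-- The trust-region objective `f(z) = (1/2) zᵀ H z + gᵀ z`. -/
noncomputable def quadObj {n : ℕ} (H : Matrix (Fin n) (Fin n) ℝ) (g z : Fin n → ℝ) : ℝ :=
  (1 / 2) * (z ⬝ᵥ H.mulVec z) + g ⬝ᵥ z

lemma enorm_eq {n : ℕ} (x : Fin n → ℝ) : euclNorm x = Real.sqrt (x ⬝ᵥ x) := by
  simp [euclNorm, dotProduct, sq]

lemma dot_self_nonneg {n : ℕ} (x : Fin n → ℝ) : 0 ≤ x ⬝ᵥ x :=
  Finset.sum_nonneg fun _ _ => mul_self_nonneg _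

lemma enorm_le_one_iff {n : ℕ} (x : Fin n → ℝ) : euclNorm x ≤ 1 ↔ x ⬝ᵥ x ≤ 1 := by
  rw [enorm_eq]
  constructor
  · intro h2; nlinarith [Real.sq_sqrt (dot_self_nonneg x), Real.sqrt_nonneg (x ⬝ᵥ x)]
  · intro h2; simpa using Real.sqrt_le_sqrt h2


/-- In the easy case (`λ₁ < 0`, `gᵀv₁ ≠ 0`), every global minimizer `z*` of `f` over the
closed unit ball lies on the sphere, every KKT multiplier `λ` satisfies `λ > −λ₁`
(so `H + λI ≻ 0`), and `z* = −(H + λI)⁻¹ g`. -/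
theorem trust_region_easy_case_solution_structure {n : ℕ}
    (H : Matrix (Fin n) (Fin n) ℝ) (hH : H.IsSymm) (g : Fin n → ℝ)
    (lam1 : ℝ) (v1 : Fin n → ℝ)
    (hv1_unit : euclNorm v1 = 1) (hv1_eig : H.mulVec v1 = lam1 • v1)
    (hlam1_min : ∀ (μ : ℝ) (w : Fin n → ℝ), w ≠ 0 → H.mulVec w = μ • w → lam1 ≤ μ)
    (hlam1_neg : lam1 < 0) (hg : g ⬝ᵥ v1 ≠ 0)
    (zs : Fin n → ℝ) (hzs_feas : euclNorm zs ≤ 1)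
    (hzs_min : ∀ z : Fin n → ℝ, euclNorm z ≤ 1 → quadObj H g zs ≤ quadObj H g z) :
    euclNorm zs = 1 ∧
      ∀ lam : ℝ, 0 ≤ lam →
        (H + lam • (1 : Matrix (Fin n) (Fin n) ℝ)).mulVec zs + g = 0 →
        lam * (1 - euclNorm zs) = 0 →
        (H + lam • (1 : Matrix (Fin n) (Fin n) ℝ)).PosSemidef →
        lam > -lam1 ∧
          (H + lam • (1 : Matrix (Fin n) (Fin n) ℝ)).PosDef ∧
          zs = -((H + lam • (1 : Matrix (Fin n) (Fin n) ℝ))⁻¹.mulVec g) := by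
  have hvv : v1 ⬝ᵥ v1 = 1 := by
    rw [enorm_eq] at hv1_unit
    nlinarith [Real.sq_sqrt (dot_self_nonneg v1)]
  -- Part 1: the minimizer is on the boundary
  have h1 : euclNorm zs = 1 := by
    by_contra hne
    have hlt : zs ⬝ᵥ zs < 1 := by
      rcases lt_or_eq_of_le ((enorm_le_one_iff zs).1 hzs_feas) with h | h
      · exact h
      · exact absurd (by rw [enorm_eq, h, Real.sqrt_one]) hne
    set c := zs ⬝ᵥ v1 with hc
    set a := lam1 * c + g ⬝ᵥ v1 with ha
    have hδpos : (0:ℝ) < 1 - zs ⬝ᵥ zs := by linarith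
    set ε := min 1 ((1 - zs ⬝ᵥ zs) / (2 * |c| + 1)) with hε
    have hεpos : 0 < ε := lt_min one_pos (div_pos hδpos (by positivity))
    set t := if 0 ≤ a then -ε else ε with ht
    have hta : t * a ≤ 0 := by
      rw [ht]; split_ifs with h
      · nlinarith
      · nlinarith [le_of_not_ge h]
    have htne : t ≠ 0 := by
      rw [ht]; split_ifs
      · exact neg_ne_zero.2 hεpos.ne'
      · exact hεpos.ne'
    have htabs : |t| = ε := by
      rw [ht]; split_ifs <;> simp [abs_of_pos hεpos]
    have hfeas : euclNorm (zs + t • v1) ≤ 1 := by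
      rw [enorm_le_one_iff]
      have hexp : (zs + t • v1) ⬝ᵥ (zs + t • v1) = zs ⬝ᵥ zs + 2 * t * c + t ^ 2 := by
        simp only [add_dotProduct, dotProduct_add, smul_dotProduct, dotProduct_smul,
          smul_eq_mul, hvv, dotProduct_comm v1 zs, ← hc]
        ring
      rw [hexp]
      have hb1 : 2 * t * c ≤ 2 * ε * |c| := by
        have h3 := le_abs_self (t * c)
        rw [abs_mul, htabs] at h3
        linarith
      have hb2 : t ^ 2 = ε ^ 2 := by rw [← sq_abs, htabs]
      have hεle1 : ε ≤ 1 := min_le_left _ _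
      have hεle : ε * (2 * |c| + 1) ≤ 1 - zs ⬝ᵥ zs := by
        have h2 : ε ≤ (1 - zs ⬝ᵥ zs) / (2 * |c| + 1) := min_le_right _ _
        have hpos : (0:ℝ) < 2 * |c| + 1 := by positivity
        calc ε * (2 * |c| + 1) ≤ ((1 - zs ⬝ᵥ zs) / (2 * |c| + 1)) * (2 * |c| + 1) := by
              nlinarith
          _ = 1 - zs ⬝ᵥ zs := by field_simp
      nlinarith
    have hvHz : v1 ⬝ᵥ H.mulVec zs = lam1 * c := by
      rw [dotProduct_mulVec]
      have hvm : v1 ᵥ* H = lam1 • v1 := by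
        rw [← hH.eq, vecMul_transpose, hv1_eig]
      rw [hvm, smul_dotProduct, smul_eq_mul, dotProduct_comm, ← hc]
    have hobj : quadObj H g (zs + t • v1) = quadObj H g zs + t * a + t ^ 2 / 2 * lam1 := by
      simp only [quadObj, mulVec_add, mulVec_smul, hv1_eig, dotProduct_add, add_dotProduct,
        dotProduct_smul, smul_dotProduct, smul_eq_mul, hvv, hvHz, dotProduct_comm v1 zs, ← hc, ha]
      ring
    have hmin := hzs_min _ hfeas
    rw [hobj] at hmin
    have ht2 : 0 < t ^ 2 := by positivity
    have hneg : t ^ 2 / 2 * lam1 < 0 :=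
      mul_neg_of_pos_of_neg (by positivity) hlam1_neg
    clear_value t ε a c
    linarith
  refine ⟨h1, fun lam hlam hKKT hcomp hPSD => ?_⟩
  set M := H + lam • (1 : Matrix (Fin n) (Fin n) ℝ) with hM
  have hMT : Mᵀ = M := by
    rw [hM, transpose_add, transpose_smul, transpose_one, hH.eq]
  have hMv1 : M.mulVec v1 = (lam1 + lam) • v1 := by
    rw [hM, add_mulVec, hv1_eig, smul_mulVec, one_mulVec, add_smul]
  have hge : -lam1 ≤ lam := by
    have h0 := hPSD.dotProduct_mulVec_nonneg v1
    rw [hMv1] at h0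
    simp only [star_trivial, dotProduct_smul, smul_eq_mul, hvv, mul_one] at h0
    linarith
  have hgt : -lam1 < lam := by
    rcases lt_or_eq_of_le hge with h | h
    · exact h
    · exfalso
      have hMv0 : M.mulVec v1 = 0 := by
        rw [hMv1, show lam1 + lam = 0 by linarith, zero_smul]
      have hMzs : M.mulVec zs = -g := eq_neg_of_add_eq_zero_left hKKT
      have hz : v1 ⬝ᵥ M.mulVec zs = 0 := by
        rw [dotProduct_mulVec]
        have : v1 ᵥ* M = 0 := by rw [← hMT, vecMul_transpose, hMv0]
        rw [this, zero_dotProduct]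
      rw [hMzs] at hz
      apply hg
      rw [dotProduct_comm]
      simpa using hz
  have hPD : M.PosDef := by
    refine PosDef.of_dotProduct_mulVec_pos hPSD.1 (fun x hx => ?_)
    rcases lt_or_eq_of_le (hPSD.dotProduct_mulVec_nonneg x) with h | h
    · exact h
    · exfalso
      have h0 : M.mulVec x = 0 := (hPSD.dotProduct_mulVec_zero_iff x).1 h.symm
      have hHx : H.mulVec x = (-lam) • x := by
        have hadd : H.mulVec x + lam • x = 0 := by
          rw [hM, add_mulVec, smul_mulVec, one_mulVec] at h0
          exact h0
        rw [neg_smul]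
        exact eq_neg_of_add_eq_zero_left hadd
      have := hlam1_min (-lam) x hx hHx
      linarith
  refine ⟨hgt, hPD, ?_⟩
  have hdet : IsUnit M.det := hPD.det_pos.ne'.isUnit
  have hMzs : M.mulVec zs = -g := eq_neg_of_add_eq_zero_left hKKT
  have : zs = M⁻¹.mulVec (-g) := by
    rw [← hMzs, mulVec_mulVec, nonsing_inv_mul _ hdet, one_mulVec]
  rw [this, mulVec_neg]
end

section
/- Let v be a unit eigenvector of H with eigenvalue μ, let 0 < η < 1/β, and let z ∈ ℝⁿ. If (zᵀv)·(gᵀv) ≤ 0, then the projected gradient step z⁺ = P(z − η(Hz + g)) satisfies (z⁺ᵀv)·(gᵀv) ≤ 0. -/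
open Matrix

/-- The Euclidean (`ℓ₂`) norm of a vector in `ℝⁿ`. -/
noncomputable def euclidNorm {n : ℕ} (x : Fin n → ℝ) : ℝ := Real.sqrt (∑ i, x i ^ 2)

/-- Euclidean metric projection onto the closed unit ball `{z : ‖z‖₂ ≤ 1}`. -/
noncomputable def projBall {n : ℕ} (x : Fin n → ℝ) : Fin n → ℝ :=
  if euclidNorm x ≤ 1 then x else (euclidNorm x)⁻¹ • x

/-- `β` is the (Euclidean) operator norm of `H`: the least nonnegative constant `c`
with `‖Hx‖₂ ≤ c ‖x‖₂` for all `x`. -/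
def IsOpNorm {n : ℕ} (H : Matrix (Fin n) (Fin n) ℝ) (β : ℝ) : Prop :=
  IsLeast {c : ℝ | 0 ≤ c ∧ ∀ x : Fin n → ℝ, euclidNorm (H.mulVec x) ≤ c * euclidNorm x} β

lemma enorm_nonneg' {n : ℕ} (x : Fin n → ℝ) : 0 ≤ euclidNorm x := Real.sqrt_nonneg _

lemma enorm_smul' {n : ℕ} (c : ℝ) (x : Fin n → ℝ) : euclidNorm (c • x) = |c| * euclidNorm x := by
  unfold euclidNorm
  rw [← Real.sqrt_sq_eq_abs, ← Real.sqrt_mul (sq_nonneg c), Finset.mul_sum]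
  congr 1
  exact Finset.sum_congr rfl fun i _ => by simp [mul_pow]

lemma symm_dot' {n : ℕ} (H : Matrix (Fin n) (Fin n) ℝ) (hH : H.IsSymm) (x y : Fin n → ℝ) :
    H.mulVec x ⬝ᵥ y = x ⬝ᵥ H.mulVec y := by
  rw [Matrix.dotProduct_mulVec]
  conv_lhs => rw [← hH, Matrix.mulVec_transpose]

/-- A projected gradient step preserves the sign condition `(zᵀv)(gᵀv) ≤ 0` along any
unit eigenvector `v` of `H`, provided `0 < η < 1/β`. -/
theorem projected_gradient_step_preserves_sign {n : ℕ}
    (H : Matrix (Fin n) (Fin n) ℝ) (hH : H.IsSymm) (g : Fin n → ℝ)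
    (β : ℝ) (hβ : IsOpNorm H β)
    (μ : ℝ) (v : Fin n → ℝ) (hv_unit : euclidNorm v = 1) (hv_eig : H.mulVec v = μ • v)
    (η : ℝ) (hη_pos : 0 < η) (hη_lt : η < 1 / β)
    (z : Fin n → ℝ) (hcorr : (z ⬝ᵥ v) * (g ⬝ᵥ v) ≤ 0) :
    (projBall (z - η • (H.mulVec z + g)) ⬝ᵥ v) * (g ⬝ᵥ v) ≤ 0 := by
  have hβ0 : 0 ≤ β := hβ.1.1
  have hβpos : 0 < β := by
    rcases hβ0.lt_or_eq with h | h
    · exact h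
    · exfalso; rw [← h] at hη_lt; simp at hη_lt; linarith
  -- |μ| ≤ β
  have hμβ : |μ| ≤ β := by
    have h1 := hβ.1.2 v
    rw [hv_eig, enorm_smul', hv_unit, mul_one, mul_one] at h1
    exact h1
  have hημ : η * μ < 1 := by
    have h1 : η * β < 1 := by
      rw [lt_div_iff₀ hβpos] at hη_lt; linarith
    have : μ ≤ |μ| := le_abs_self μ
    nlinarith
  -- dot product of the step with v
  have hdot : (z - η • (H.mulVec z + g)) ⬝ᵥ v
      = (1 - η * μ) * (z ⬝ᵥ v) - η * (g ⬝ᵥ v) := by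
    have hz : H.mulVec z ⬝ᵥ v = μ * (z ⬝ᵥ v) := by
      rw [symm_dot' H hH, hv_eig, dotProduct_smul, smul_eq_mul, dotProduct_comm]
    rw [sub_dotProduct, smul_dotProduct, add_dotProduct, hz, smul_eq_mul]
    ring
  have hkey : ((z - η • (H.mulVec z + g)) ⬝ᵥ v) * (g ⬝ᵥ v) ≤ 0 := by
    rw [hdot]
    have h1 : (1 - η * μ) * ((z ⬝ᵥ v) * (g ⬝ᵥ v)) ≤ 0 :=
      mul_nonpos_of_nonneg_of_nonpos (by linarith) hcorr
    nlinarith [sq_nonneg (g ⬝ᵥ v)]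
  unfold projBall
  split_ifs with h
  · exact hkey
  · rw [smul_dotProduct, smul_eq_mul, mul_assoc]
    exact mul_nonpos_of_nonneg_of_nonpos (inv_nonneg.mpr (enorm_nonneg' _)) hkey
end
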